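/- Let U be a unitary k×k complex matrix, let P be an orthogonal projection on ℂ^k, and let 0 ≤ δ ≤ 0.6 satisfy ‖[P, U]‖ ≤ δ. Let T be the compression of U to range(P), i.e. the map v ↦ P U v on range(P). Then T is invertible and ‖polar(T) − T‖ ≤ δ², where polar(T) = T (T†T)^{−1/2}. -/

import Mathlib

open scoped InnerProductSpace
set_option maxHeartbeats 1000000


/-- The polar part of an operator on a Hilbert space: `polar X = X (X†X)^{-1/2}`,
where the inverse square root is computed by the functional calculus (`Ring.inverse`
of the positive square root). -/
noncomputable def polarCLM {V : Type*} [NormedAddCommGroup V] [InnerProductSpace ℂ V]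
    [CompleteSpace V] (T : V →L[ℂ] V) : V →L[ℂ] V :=
  T * Ring.inverse (cfc Real.sqrt (star T * T))

/-- The compression of an operator `U` to the range of `P`: the map `v ↦ P (U v)`
on `range P`. -/
noncomputable def compress {E : Type*} [NormedAddCommGroup E] [InnerProductSpace ℂ E]
    (P U : E →L[ℂ] E) : (LinearMap.range (P : E →ₗ[ℂ] E)) →L[ℂ] (LinearMap.range (P : E →ₗ[ℂ] E)) :=
  ((P ∘L U) ∘L (LinearMap.range (P : E →ₗ[ℂ] E)).subtypeL).codRestrict (LinearMap.range (P : E →ₗ[ℂ] E))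
    (fun v => LinearMap.mem_range.mpr ⟨U v, rfl⟩)

lemma isUnit_of_injective_clm {V : Type*} [NormedAddCommGroup V] [InnerProductSpace ℂ V]
    [FiniteDimensional ℂ V] (f : V →L[ℂ] V) (h : Function.Injective f) : IsUnit f := by
  have hbij : Function.Bijective f :=
    ⟨h, (LinearMap.injective_iff_surjective (f := (f : V →ₗ[ℂ] V))).mp h⟩
  let e := LinearEquiv.ofBijective (f : V →ₗ[ℂ] V) hbij
  let e' : V ≃L[ℂ] V := e.toContinuousLinearEquiv
  refine ⟨⟨f, e'.symm.toContinuousLinearMap, ?_, ?_⟩, rfl⟩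
  · ext x
    show f (e'.symm x) = x
    have : f (e.symm x) = x := e.apply_symm_apply x
    exact this
  · ext x
    show e'.symm (f x) = x
    exact e.symm_apply_apply x

lemma exists_eigenvector_of_mem_spectrum {V : Type*} [NormedAddCommGroup V]
    [InnerProductSpace ℂ V] [FiniteDimensional ℂ V] (A : V →L[ℂ] V) {μ : ℝ}
    (hμ : μ ∈ spectrum ℝ A) : ∃ v : V, v ≠ 0 ∧ A v = (μ : ℂ) • v := by
  rw [spectrum.mem_iff] at hμ
  set B : V →L[ℂ] V := algebraMap ℝ (V →L[ℂ] V) μ - A with hB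
  by_contra hcon
  push_neg at hcon
  apply hμ
  apply isUnit_of_injective_clm
  rw [show (⇑B : V → V) = ⇑(B : V →ₗ[ℂ] V) from rfl, ← LinearMap.ker_eq_bot,
    Submodule.eq_bot_iff]
  intro v hv
  by_contra hv0
  refine hcon v hv0 ?_
  have : B v = 0 := hv
  have h2 : (algebraMap ℝ (V →L[ℂ] V) μ) v = A v := by
    have := sub_eq_zero.mp (by simpa [hB] using this)
    simpa using this
  rw [← h2]
  simp [Algebra.algebraMap_eq_smul_one]

lemma polar_aux {V : Type*} [NormedAddCommGroup V] [InnerProductSpace ℂ V]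
    [FiniteDimensional ℂ V] (T : V →L[ℂ] V) (δ : ℝ) (hδ0 : 0 ≤ δ) (hδ1 : δ ≤ 0.6)
    (hTge : ∀ v : V, (1 - δ ^ 2) * ‖v‖ ^ 2 ≤ ‖T v‖ ^ 2)
    (hTle : ∀ v : V, ‖T v‖ ≤ ‖v‖) :
    IsUnit T ∧ ‖polarCLM T - T‖ ≤ δ ^ 2 := by
  by_cases htriv : Subsingleton V
  · haveI := htriv
    haveI : Subsingleton (V →L[ℂ] V) :=
      ⟨fun f g => ContinuousLinearMap.ext fun x => Subsingleton.elim _ _⟩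
    refine ⟨isUnit_of_subsingleton _, ?_⟩
    rw [Subsingleton.elim (polarCLM T - T) 0, norm_zero]
    positivity
  haveI : Nontrivial V := not_subsingleton_iff_nontrivial.mp htriv
  have hδsq : δ ^ 2 ≤ 0.36 := by nlinarith
  have hpos : (0 : ℝ) < 1 - δ ^ 2 := by nlinarith
  -- invertibility of T
  have hTinj : Function.Injective T := by
    have hker : ∀ v : V, T v = 0 → v = 0 := by
      intro v hv
      have := hTge v
      rw [hv, norm_zero] at this
      have hv2 : ‖v‖ ^ 2 ≤ 0 := by nlinarith
      have : ‖v‖ = 0 := by nlinarith [sq_nonneg ‖v‖, norm_nonneg v]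
      exact norm_eq_zero.mp this
    intro x y hxy
    have := hker (x - y) (by rw [map_sub, hxy, sub_self])
    exact sub_eq_zero.mp this
  have hTunit : IsUnit T := isUnit_of_injective_clm T hTinj
  -- the operator A = T† T and its spectrum
  set A := star T * T with hA
  have hAsa : IsSelfAdjoint A := IsSelfAdjoint.star_mul_self T
  have hAv : ∀ v : V, ⟪A v, v⟫_ℂ = ((‖T v‖ : ℂ)) ^ 2 := by
    intro v
    show ⟪(star T) (T v), v⟫_ℂ = _
    rw [ContinuousLinearMap.star_eq_adjoint, ContinuousLinearMap.adjoint_inner_left]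
    exact inner_self_eq_norm_sq_to_K _
  have hspec : spectrum ℝ A ⊆ Set.Icc (1 - δ ^ 2) 1 := by
    intro μ hμ
    obtain ⟨v, hv0, hv⟩ := exists_eigenvector_of_mem_spectrum A hμ
    have h1 : ⟪A v, v⟫_ℂ = ((μ * ‖v‖ ^ 2 : ℝ) : ℂ) := by
      rw [hv, inner_smul_left, inner_self_eq_norm_sq_to_K]
      push_cast [Complex.conj_ofReal]
      norm_num
    have h2 : μ * ‖v‖ ^ 2 = ‖T v‖ ^ 2 := by
      have := (h1.symm.trans (hAv v))
      exact_mod_cast this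
    have hvpos : 0 < ‖v‖ := norm_pos_iff.mpr hv0
    constructor
    · have := hTge v; nlinarith [mul_pos hvpos hvpos, sq_nonneg ‖v‖]
    · have := hTle v
      have h3 : ‖T v‖ ^ 2 ≤ ‖v‖ ^ 2 := pow_le_pow_left₀ (norm_nonneg _) this 2
      nlinarith [mul_pos hvpos hvpos, sq_nonneg ‖v‖]
  have hspec_pos : ∀ x ∈ spectrum ℝ A, 0 < x := fun x hx =>
    lt_of_lt_of_le hpos (hspec hx).1
  -- the square root S
  set S := cfc Real.sqrt A with hS
  have hSsa : IsSelfAdjoint S := by rw [hS]; exact cfc_predicate Real.sqrt A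
  have hSS : S * S = A := by
    have hc : cfc (fun x : ℝ => Real.sqrt x * Real.sqrt x) A = cfc (id : ℝ → ℝ) A :=
      cfc_congr (fun x hx => Real.mul_self_sqrt (hspec_pos x hx).le)
    rw [hS, ← cfc_mul Real.sqrt Real.sqrt A, hc, cfc_id ℝ A]
  have hSunit : IsUnit S := by
    rw [← spectrum.zero_notMem_iff (R := ℝ)]
    rw [hS, cfc_map_spectrum Real.sqrt A]
    rintro ⟨x, hx, hx0⟩
    exact absurd hx0 (ne_of_gt (Real.sqrt_pos.mpr (hspec_pos x hx)))
  -- the polar part Q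
  set R := Ring.inverse S with hR
  have hRS : R * S = 1 := Ring.inverse_mul_cancel S hSunit
  have hSR : S * R = 1 := Ring.mul_inverse_cancel S hSunit
  have hRsa : star R = R := by
    rw [hR, ← Ring.inverse_star, hSsa.star_eq]
  set Q := T * R with hQdef
  have hQ : polarCLM T = Q := rfl
  have hQS : Q * S = T := by
    rw [hQdef, mul_assoc, hRS, mul_one]
  have hstarQQ : star Q * Q = 1 := by
    have h1 : star Q = R * star T := by rw [hQdef, star_mul, hRsa]
    rw [h1, hQdef]
    calc R * star T * (T * R) = R * (star T * T * R) := by rw [mul_assoc, ← mul_assoc (star T)]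
      _ = R * (S * (S * R)) := by rw [← hA, ← hSS, mul_assoc]
      _ = 1 := by rw [hSR, mul_one, hRS]
  have hQnorm : ‖Q‖ = 1 := by
    have h1 : ‖star Q * Q‖ = ‖Q‖ * ‖Q‖ := CStarRing.norm_star_mul_self
    rw [hstarQQ] at h1
    have h2 : ‖(1 : V →L[ℂ] V)‖ = 1 := by
      rw [ContinuousLinearMap.one_def, ContinuousLinearMap.norm_id]
    rw [h2] at h1
    nlinarith [norm_nonneg Q]
  -- bound on 1 - S
  have hbound : ‖(1 : V →L[ℂ] V) - S‖ ≤ δ ^ 2 := by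
    have hone : (1 : V →L[ℂ] V) - S = cfc (fun x : ℝ => 1 - Real.sqrt x) A := by
      rw [cfc_sub (fun _ : ℝ => (1 : ℝ)) Real.sqrt A, hS]
      congr 1
      rw [show (fun _ : ℝ => (1 : ℝ)) = (1 : ℝ → ℝ) from rfl, cfc_one ℝ A]
    rw [hone]
    apply norm_cfc_le (by positivity)
    intro x hx
    obtain ⟨hx1, hx2⟩ := hspec hx
    have hs1 : Real.sqrt x ≤ 1 := Real.sqrt_le_one.mpr hx2
    have hs2 : 1 - δ ^ 2 ≤ Real.sqrt x := by
      have hxx : (1 - δ ^ 2) ^ 2 ≤ x := by nlinarith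
      calc 1 - δ ^ 2 = Real.sqrt ((1 - δ ^ 2) ^ 2) := (Real.sqrt_sq hpos.le).symm
        _ ≤ Real.sqrt x := Real.sqrt_le_sqrt hxx
    rw [Real.norm_eq_abs, abs_of_nonneg (by linarith)]
    linarith
  -- conclusion
  refine ⟨hTunit, ?_⟩
  have hdiff : polarCLM T - T = Q * (1 - S) := by
    rw [hQ, mul_sub, mul_one, hQS]
  calc ‖polarCLM T - T‖ = ‖Q * (1 - S)‖ := by rw [hdiff]
    _ ≤ ‖Q‖ * ‖1 - S‖ := norm_mul_le _ _
    _ = ‖1 - S‖ := by rw [hQnorm, one_mul]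
    _ ≤ δ ^ 2 := hbound

lemma proj_pythagoras {E : Type*} [NormedAddCommGroup E] [InnerProductSpace ℂ E]
    [CompleteSpace E] (P : E →L[ℂ] E) (hPsa : IsSelfAdjoint P) (hPproj : P * P = P)
    (w : E) : ‖P w‖ ^ 2 + ‖w - P w‖ ^ 2 = ‖w‖ ^ 2 := by
  have hsym := hPsa.isSymmetric
  have hPP : P (P w) = P w := by
    have := congrArg (fun f : E →L[ℂ] E => f w) hPproj
    simpa using this
  have horth : ⟪P w, w - P w⟫_ℂ = 0 := by
    have h1 : ⟪P w, P w⟫_ℂ = ⟪P w, w⟫_ℂ := by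
      calc ⟪P w, P w⟫_ℂ = ⟪w, P (P w)⟫_ℂ := hsym w (P w)
        _ = ⟪w, P w⟫_ℂ := by rw [hPP]
        _ = ⟪P w, w⟫_ℂ := (hsym w w).symm
    rw [inner_sub_right, h1, sub_self]
  have := norm_add_sq (𝕜 := ℂ) (P w) (w - P w)
  simp only [horth, map_zero, mul_zero, add_zero] at this
  have hw : P w + (w - P w) = w := by abel
  rw [hw] at this
  linarith

theorem stmt5 {k : ℕ} (hk : 1 ≤ k)
    (E : Type*) [NormedAddCommGroup E] [InnerProductSpace ℂ E] [FiniteDimensional ℂ E]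
    (hdim : Module.finrank ℂ E = k)
    (U : E →L[ℂ] E) (hU : U ∈ unitary (E →L[ℂ] E))
    (P : E →L[ℂ] E) (hPsa : IsSelfAdjoint P) (hPproj : P * P = P)
    (δ : ℝ) (hδ0 : 0 ≤ δ) (hδ1 : δ ≤ 0.6)
    (hPU : ‖P * U - U * P‖ ≤ δ) :
    IsUnit (compress P U) ∧ ‖polarCLM (compress P U) - compress P U‖ ≤ δ ^ 2 := by
  set T : ↥(LinearMap.range (P : E →ₗ[ℂ] E)) →L[ℂ] ↥(LinearMap.range (P : E →ₗ[ℂ] E)) := compress P U with hTdef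
  have hTapp : ∀ v : ↥(LinearMap.range (P : E →ₗ[ℂ] E)), (T v : E) = P (U (v : E)) := fun v => rfl
  have hPv : ∀ v : ↥(LinearMap.range (P : E →ₗ[ℂ] E)), P (v : E) = (v : E) := by
    rintro ⟨v, u, rfl⟩
    have := congrArg (fun f : E →L[ℂ] E => f u) hPproj
    simpa using this
  have hVnorm : ∀ v : ↥(LinearMap.range (P : E →ₗ[ℂ] E)), ‖(v : E)‖ = ‖v‖ := fun v => rfl
  have hUnorm : ∀ w : E, ‖U w‖ = ‖w‖ := by
    intro w
    have h2 : (star U * U) w = w := by rw [hU.1]; rfl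
    have h1 : ⟪U w, U w⟫_ℂ = ⟪w, w⟫_ℂ := by
      calc ⟪U w, U w⟫_ℂ = ⟪w, (ContinuousLinearMap.adjoint U) (U w)⟫_ℂ :=
            (ContinuousLinearMap.adjoint_inner_right U w (U w)).symm
        _ = ⟪w, w⟫_ℂ := by
            rw [← ContinuousLinearMap.star_eq_adjoint,
              show (star U) (U w) = (star U * U) w from rfl, h2]
    rw [inner_self_eq_norm_sq_to_K, inner_self_eq_norm_sq_to_K] at h1
    have h3 : ‖U w‖ ^ 2 = ‖w‖ ^ 2 := by exact_mod_cast h1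
    calc ‖U w‖ = Real.sqrt (‖U w‖ ^ 2) := (Real.sqrt_sq (norm_nonneg _)).symm
      _ = Real.sqrt (‖w‖ ^ 2) := by rw [h3]
      _ = ‖w‖ := Real.sqrt_sq (norm_nonneg _)
  have hTnorm : ∀ v : ↥(LinearMap.range (P : E →ₗ[ℂ] E)), ‖T v‖ = ‖P (U (v : E))‖ := by
    intro v
    rw [← hVnorm (T v), hTapp v]
  have hTnormsq : ∀ v : ↥(LinearMap.range (P : E →ₗ[ℂ] E)),
      ‖T v‖ ^ 2 = ‖v‖ ^ 2 - ‖U (v : E) - P (U (v : E))‖ ^ 2 := by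
    intro v
    have hp := proj_pythagoras P hPsa hPproj (U (v : E))
    rw [hTnorm v, hUnorm, hVnorm] at *
    linarith
  have hcommnorm : ∀ v : ↥(LinearMap.range (P : E →ₗ[ℂ] E)),
      ‖U (v : E) - P (U (v : E))‖ ≤ δ * ‖v‖ := by
    intro v
    have hc : U (v : E) - P (U (v : E)) = (U * P - P * U) (v : E) := by
      simp [ContinuousLinearMap.sub_apply, ContinuousLinearMap.mul_apply, hPv v]
    rw [hc]
    calc ‖(U * P - P * U) (v : E)‖ ≤ ‖U * P - P * U‖ * ‖(v : E)‖ :=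
          ContinuousLinearMap.le_opNorm _ _
      _ ≤ δ * ‖v‖ := by
          rw [hVnorm]
          have : ‖U * P - P * U‖ = ‖P * U - U * P‖ := by rw [← norm_neg]; congr 1; abel
          exact mul_le_mul_of_nonneg_right (this ▸ hPU) (norm_nonneg _)
  have hTge : ∀ v : ↥(LinearMap.range (P : E →ₗ[ℂ] E)), (1 - δ ^ 2) * ‖v‖ ^ 2 ≤ ‖T v‖ ^ 2 := by
    intro v
    have h1 := hTnormsq v
    have h2 := hcommnorm v
    have h3 : ‖U (v : E) - P (U (v : E))‖ ^ 2 ≤ (δ * ‖v‖) ^ 2 :=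
      pow_le_pow_left₀ (norm_nonneg _) h2 2
    nlinarith [norm_nonneg v]
  have hTle : ∀ v : ↥(LinearMap.range (P : E →ₗ[ℂ] E)), ‖T v‖ ≤ ‖v‖ := by
    intro v
    have h1 := hTnormsq v
    have h2 : ‖T v‖ ^ 2 ≤ ‖v‖ ^ 2 := by nlinarith [sq_nonneg ‖U (v : E) - P (U (v : E))‖]
    calc ‖T v‖ = Real.sqrt (‖T v‖ ^ 2) := (Real.sqrt_sq (norm_nonneg _)).symm
      _ ≤ Real.sqrt (‖v‖ ^ 2) := Real.sqrt_le_sqrt h2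
      _ = ‖v‖ := Real.sqrt_sq (norm_nonneg _)
  exact polar_aux T δ hδ0 hδ1 hTge hTle
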